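/- Let X be a list of nonzero vectors all lying in an open half-space of g* (i.e. there exists x ∈ g with ⟨x,a⟩ > 0 for all a ∈ X). The multivariate spline T_X, the tempered distribution on g* defined by ⟨T_X, f⟩ = ∫_{[0,∞)^m} f(Σ t_i a_i) dt, satisfies T_X = T_a * T_{X∖a} and ∂_a T_X = T_{X∖a} for every a ∈ X; consequently ∂_X T_X = δ_0. -/

import Mathlib

/-!
STATEMENT 11: For a list X of nonzero vectors lying in an open half-space of
g*, the multivariate spline T_X satisfies T_X = T_a * T_{X∖a} and
∂_a T_X = T_{X∖a} for every a ∈ X; consequently ∂_X T_X = δ_0.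
(Equalities of tempered distributions, i.e. tested against Schwartz functions.)
-/

noncomputable section

open scoped BigOperators
open MeasureTheory

abbrev Vg (n : ℕ) := EuclideanSpace ℝ (Fin n)

/-- Generalized functions: functionals on test functions. -/
abbrev GDist (n : ℕ) := (Vg n → ℝ) → ℝ

/-- Distributional directional derivative along `a`. -/
def dirD {n : ℕ} (a : Vg n) (T : GDist n) : GDist n :=
  fun f => - T (fun x => fderiv ℝ f x a)

/-- Iterated distributional derivative ∂_Y along the sublist of X indexed by S. -/
def iterD {n m : ℕ} (X : Fin m → Vg n) (S : Finset (Fin m)) (T : GDist n) : GDist n :=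
  S.toList.foldr (fun i T => dirD (X i) T) T

/-- The Dirac delta at the origin. -/
def delta0 {n : ℕ} : GDist n := fun f => f 0

/-- Convolution of generalized functions. -/
def conv {n : ℕ} (S T : GDist n) : GDist n :=
  fun f => S fun x => T fun y => f (x + y)

/-- The multivariate spline T_Y of the sublist Y of X indexed by S:
⟨T_Y, f⟩ = ∫_{[0,∞)^S} f(∑ tᵢ aᵢ) dt. -/
def TS {n m : ℕ} (X : Fin m → Vg n) (S : Finset (Fin m)) : GDist n :=
  fun f => ∫ t : (↥S → ℝ) in {t | ∀ i, 0 ≤ t i}, f (∑ i, t i • X i)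

/-- Equality as tempered distributions: equal pairings with Schwartz functions. -/
def DEq {n : ℕ} (S T : GDist n) : Prop :=
  ∀ f : SchwartzMap (Vg n) ℝ, S ⇑f = T ⇑f

open MeasureTheory Filter Set

namespace Aux11

variable {n m : ℕ}

instance uniqSing (i₀ : Fin m) : Unique ↥({i₀} : Finset (Fin m)) :=
  ⟨⟨⟨i₀, Finset.mem_singleton_self i₀⟩⟩, fun j => Subtype.ext (Finset.mem_singleton.1 j.2)⟩

def Oset (S : Finset (Fin m)) : Set (↥S → ℝ) := {t | ∀ i, 0 ≤ t i}

lemma Oset_measurable (S : Finset (Fin m)) : MeasurableSet (Oset S) := by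
  have : Oset S = ⋂ i, {t : ↥S → ℝ | 0 ≤ t i} := by
    ext t; simp [Oset]
  rw [this]
  exact MeasurableSet.iInter fun i =>
    measurableSet_le measurable_const (measurable_pi_apply i)

lemma cont_sig (X : Fin m → Vg n) (S : Finset (Fin m)) :
    Continuous (fun t : ↥S → ℝ => ∑ i, t i • X i) :=
  continuous_finset_sum _ fun i _ => (continuous_apply i).smul continuous_const

lemma decay_bound (f : SchwartzMap (Vg n) ℝ) (k : ℕ) :
    ∃ C : ℝ, ∀ v, (1 + ‖v‖) ^ k * ‖f v‖ ≤ C := by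
  refine ⟨2 ^ k * (Finset.Iic (k, 0)).sup (fun m => SchwartzMap.seminorm ℝ m.1 m.2) f,
    fun v => ?_⟩
  have := SchwartzMap.one_add_le_sup_seminorm_apply (𝕜 := ℝ) (m := (k, 0)) le_rfl le_rfl f v
  rwa [norm_iteratedFDeriv_zero] at this

lemma integrable_inv_sq (c : ℝ) (hc : 0 < c) :
    Integrable (fun s : ℝ => (1 + (c * s) ^ 2)⁻¹) :=
  integrable_inv_one_add_sq.comp_mul_left' hc.ne'


lemma norm_x_pos {x : Vg n} {X : Fin m → Vg n}
    (hx : ∀ i, 0 < inner (𝕜 := ℝ) x (X i)) (i : Fin m) : 0 < ‖x‖ := by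
  rcases eq_or_ne x 0 with h | h
  · have := hx i; rw [h] at this; simp at this
  · exact norm_pos_iff.2 h

lemma inner_sig {x : Vg n} (X : Fin m → Vg n) (S : Finset (Fin m)) (t : ↥S → ℝ) :
    inner (𝕜 := ℝ) x (∑ i, t i • X i) = ∑ i, t i * inner (𝕜 := ℝ) x (X i) := by
  rw [inner_sum]
  exact Finset.sum_congr rfl fun i _ => real_inner_smul_right _ _ _

lemma integrableOn_schwartz (X : Fin m → Vg n) {x : Vg n}
    (hx : ∀ i, 0 < inner (𝕜 := ℝ) x (X i)) (S : Finset (Fin m)) (hS : S.Nonempty)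
    (f : SchwartzMap (Vg n) ℝ) :
    IntegrableOn (fun t : ↥S → ℝ => f (∑ i, t i • X i)) (Oset S) := by
  obtain ⟨j₀, hj₀⟩ := hS
  have hxn : 0 < ‖x‖ := norm_x_pos hx j₀
  set c : ℝ := S.inf' ⟨j₀, hj₀⟩ (fun i => inner (𝕜 := ℝ) x (X i) / ‖x‖) with hcdef
  have hc : 0 < c := (Finset.lt_inf'_iff _).2 fun i _ => div_pos (hx i) hxn
  set k : ℕ := 2 * S.card with hkdef
  obtain ⟨C, hC⟩ := decay_bound f k
  have hkey : ∀ t ∈ Oset S, c * ∑ i, t i ≤ ‖∑ i, t i • X (i:Fin m)‖ := by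
    intro t ht
    have h1 : c * ∑ i, t i ≤ ∑ i : ↥S, (inner (𝕜 := ℝ) x (X i) / ‖x‖) * t i := by
      rw [Finset.mul_sum]
      refine Finset.sum_le_sum fun i _ => ?_
      exact mul_le_mul_of_nonneg_right (Finset.inf'_le _ i.2) (ht i)
    have h2 : ∑ i : ↥S, (inner (𝕜 := ℝ) x (X i) / ‖x‖) * t i
        = inner (𝕜 := ℝ) x (∑ i, t i • X i) / ‖x‖ := by
      rw [inner_sig, Finset.sum_div]
      exact Finset.sum_congr rfl fun i _ => by ring
    have h3 : inner (𝕜 := ℝ) x (∑ i, t i • X i) / ‖x‖ ≤ ‖∑ i, t i • X (i:Fin m)‖ := by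
      rw [div_le_iff₀ hxn]
      calc inner (𝕜 := ℝ) x (∑ i, t i • X i)
          ≤ ‖x‖ * ‖∑ i, t i • X (i:Fin m)‖ := real_inner_le_norm _ _
        _ = ‖∑ i, t i • X (i:Fin m)‖ * ‖x‖ := mul_comm _ _
    linarith [h1, h2 ▸ h1, h3]
  have hmaj : Integrable (fun t : ↥S → ℝ => C * ∏ i, (1 + (c * t i) ^ 2)⁻¹) :=
    (Integrable.fintype_prod (f := fun _ : ↥S => fun s : ℝ => (1 + (c * s) ^ 2)⁻¹)
      fun _ => integrable_inv_sq c hc).const_mul C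
  refine Integrable.mono' hmaj.integrableOn
    ((f.continuous.comp (cont_sig X S)).aestronglyMeasurable.restrict) ?_
  refine (ae_restrict_iff' (Oset_measurable S)).2 (ae_of_all _ fun t ht => ?_)
  have hst : 0 ≤ ∑ i, t i := Finset.sum_nonneg fun i _ => ht i
  set v := ∑ i, t i • X (i:Fin m) with hv
  have hσ : c * ∑ i, t i ≤ ‖v‖ := hkey t ht
  have hprod : ∏ i, (1 + (c * t i) ^ 2) ≤ (1 + ‖v‖) ^ k := by
    have e1 : ∏ i : ↥S, (1 + (c * t i) ^ 2) ≤ ∏ _i : ↥S, (1 + c * ∑ j, t j) ^ 2 := by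
      refine Finset.prod_le_prod (fun i _ => by positivity) (fun i _ => ?_)
      have hb : c * t i ≤ c * ∑ j, t j :=
        mul_le_mul_of_nonneg_left (Finset.single_le_sum (fun j _ => ht j)
          (Finset.mem_univ i)) hc.le
      have hb0 : 0 ≤ c * t i := mul_nonneg hc.le (ht i)
      nlinarith [mul_nonneg hc.le hst]
    have e2 : ∏ _i : ↥S, ((1:ℝ) + c * ∑ j, t j) ^ 2 = (1 + c * ∑ j, t j) ^ k := by
      rw [Finset.prod_const, ← pow_mul, hkdef]
      congr 1
      rw [Finset.card_univ, Fintype.card_coe, mul_comm]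
    have e3 : ((1:ℝ) + c * ∑ j, t j) ^ k ≤ (1 + ‖v‖) ^ k := by
      refine pow_le_pow_left₀ (by positivity) (by linarith) k
    calc ∏ i, (1 + (c * t i) ^ 2) ≤ ∏ _i : ↥S, ((1:ℝ) + c * ∑ j, t j) ^ 2 := e1
      _ = _ := e2
      _ ≤ _ := e3
  have hpp : 0 < ∏ i, ((1:ℝ) + (c * t i) ^ 2) :=
    Finset.prod_pos fun i _ => by positivity
  have hb : ‖f v‖ * ∏ i, (1 + (c * t i) ^ 2) ≤ C := by
    calc ‖f v‖ * ∏ i, (1 + (c * t i) ^ 2) ≤ ‖f v‖ * (1 + ‖v‖) ^ k :=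
          mul_le_mul_of_nonneg_left hprod (norm_nonneg _)
      _ = (1 + ‖v‖) ^ k * ‖f v‖ := mul_comm _ _
      _ ≤ C := hC v
  have : ‖f v‖ ≤ C / ∏ i, (1 + (c * t i) ^ 2) := (le_div_iff₀ hpp).2 hb
  calc ‖f v‖ ≤ C / ∏ i, (1 + (c * t i) ^ 2) := this
    _ = C * ∏ i, (1 + (c * t i) ^ 2)⁻¹ := by
        rw [div_eq_mul_inv, Finset.prod_inv_distrib]


lemma line_estimate {X : Fin m → Vg n} {x : Vg n}
    (hx : ∀ i, 0 < inner (𝕜 := ℝ) x (X i)) (i₀ : Fin m) {w : Vg n}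
    (hw : 0 ≤ inner (𝕜 := ℝ) x w) (f : SchwartzMap (Vg n) ℝ) :
    ∃ c C : ℝ, 0 < c ∧ ∀ s : ℝ, 0 ≤ s → ‖f (s • X i₀ + w)‖ ≤ C * (1 + (c * s) ^ 2)⁻¹ := by
  have hxn : 0 < ‖x‖ := norm_x_pos hx i₀
  set c : ℝ := inner (𝕜 := ℝ) x (X i₀) / ‖x‖ with hcdef
  have hc : 0 < c := div_pos (hx i₀) hxn
  obtain ⟨C, hC⟩ := decay_bound f 2
  refine ⟨c, C, hc, fun s hs => ?_⟩
  set v := s • X i₀ + w with hv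
  have hlow : c * s ≤ ‖v‖ := by
    have h1 : inner (𝕜 := ℝ) x v = s * inner (𝕜 := ℝ) x (X i₀) + inner (𝕜 := ℝ) x w := by
      rw [hv, inner_add_right, real_inner_smul_right]
    have h2 : inner (𝕜 := ℝ) x v ≤ ‖x‖ * ‖v‖ := real_inner_le_norm _ _
    have h3 : s * inner (𝕜 := ℝ) x (X i₀) ≤ ‖x‖ * ‖v‖ := by linarith
    rw [hcdef]
    rw [div_mul_eq_mul_div, div_le_iff₀ hxn]
    calc inner (𝕜 := ℝ) x (X i₀) * s = s * inner (𝕜 := ℝ) x (X i₀) := mul_comm _ _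
      _ ≤ ‖x‖ * ‖v‖ := h3
      _ = ‖v‖ * ‖x‖ := mul_comm _ _
  have hcs : 0 ≤ c * s := mul_nonneg hc.le hs
  have hsq : (1:ℝ) + (c * s) ^ 2 ≤ (1 + ‖v‖) ^ 2 := by nlinarith [norm_nonneg v]
  have hpp : (0:ℝ) < 1 + (c * s) ^ 2 := by positivity
  have hb : ‖f v‖ * (1 + (c * s) ^ 2) ≤ C := by
    calc ‖f v‖ * (1 + (c * s) ^ 2) ≤ ‖f v‖ * (1 + ‖v‖) ^ 2 :=
          mul_le_mul_of_nonneg_left hsq (norm_nonneg _)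
      _ = (1 + ‖v‖) ^ 2 * ‖f v‖ := mul_comm _ _
      _ ≤ C := hC v
  calc ‖f v‖ ≤ C / (1 + (c * s) ^ 2) := (le_div_iff₀ hpp).2 hb
    _ = C * (1 + (c * s) ^ 2)⁻¹ := div_eq_mul_inv _ _

lemma line_integrableOn {X : Fin m → Vg n} {x : Vg n}
    (hx : ∀ i, 0 < inner (𝕜 := ℝ) x (X i)) (i₀ : Fin m) {w : Vg n}
    (hw : 0 ≤ inner (𝕜 := ℝ) x w) (f : SchwartzMap (Vg n) ℝ) :
    IntegrableOn (fun s : ℝ => f (s • X i₀ + w)) (Ioi 0) := by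
  obtain ⟨c, C, hc, hb⟩ := line_estimate hx i₀ hw f
  refine Integrable.mono' (((integrable_inv_sq c hc).const_mul C).integrableOn)
    ((f.continuous.comp ((continuous_id.smul continuous_const).add
      continuous_const)).aestronglyMeasurable.restrict) ?_
  refine (ae_restrict_iff' measurableSet_Ioi).2 (ae_of_all _ fun s hs => hb s (le_of_lt hs))

lemma line_tendsto {X : Fin m → Vg n} {x : Vg n}
    (hx : ∀ i, 0 < inner (𝕜 := ℝ) x (X i)) (i₀ : Fin m) {w : Vg n}
    (hw : 0 ≤ inner (𝕜 := ℝ) x w) (f : SchwartzMap (Vg n) ℝ) :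
    Tendsto (fun s : ℝ => f (s • X i₀ + w)) atTop (nhds 0) := by
  obtain ⟨c, C, hc, hb⟩ := line_estimate hx i₀ hw f
  have h1 : Tendsto (fun s : ℝ => c * s) atTop atTop :=
    Tendsto.const_mul_atTop hc tendsto_id
  have h2 : Tendsto (fun s : ℝ => 1 + (c * s) ^ 2) atTop atTop := by
    have := h1.atTop_mul_atTop₀ h1
    simp only [← pow_two] at this
    exact tendsto_atTop_add_const_left _ 1 this
  have h3 : Tendsto (fun s : ℝ => C * (1 + (c * s) ^ 2)⁻¹) atTop (nhds 0) := by
    have := (tendsto_inv_atTop_zero.comp h2).const_mul C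
    simpa using this
  exact squeeze_zero_norm' ((eventually_ge_atTop 0).mono fun s hs => hb s hs) h3

lemma line_integral {X : Fin m → Vg n} {x : Vg n}
    (hx : ∀ i, 0 < inner (𝕜 := ℝ) x (X i)) (i₀ : Fin m) {w : Vg n}
    (hw : 0 ≤ inner (𝕜 := ℝ) x w) (f : SchwartzMap (Vg n) ℝ) :
    ∫ s in Ici (0:ℝ), fderiv ℝ f (s • X i₀ + w) (X i₀) = - f w := by
  have hder : ∀ s : ℝ, HasDerivAt (fun s : ℝ => f (s • X i₀ + w))
      (fderiv ℝ f (s • X i₀ + w) (X i₀)) s := by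
    intro s
    have hφ : HasDerivAt (fun s : ℝ => s • X i₀ + w) (X i₀) s := by
      simpa using ((hasDerivAt_id s).smul_const (X i₀)).add_const w
    exact (f.differentiableAt.hasFDerivAt.comp_hasDerivAt s hφ)
  have hDf : (fun v => fderiv ℝ f v (X i₀)) = ⇑((LineDeriv.lineDerivOp (X i₀) f : SchwartzMap (Vg n) ℝ)) :=
    funext fun v => (SchwartzMap.lineDerivOp_apply_eq_fderiv (X i₀) f v).symm
  have hint : IntegrableOn (fun s : ℝ => fderiv ℝ f (s • X i₀ + w) (X i₀)) (Ioi 0) := by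
    have := line_integrableOn hx i₀ hw ((LineDeriv.lineDerivOp (X i₀) f : SchwartzMap (Vg n) ℝ))
    simpa [← hDf] using this
  have := integral_Ioi_of_hasDerivAt_of_tendsto
    (f := fun s : ℝ => f (s • X i₀ + w))
    (f' := fun s : ℝ => fderiv ℝ f (s • X i₀ + w) (X i₀))
    (a := 0) (m := 0)
    (hder 0).continuousAt.continuousWithinAt
    (fun s _ => hder s) hint (line_tendsto hx i₀ hw f)
  rw [MeasureTheory.integral_Ici_eq_integral_Ioi, this]
  simp


section Split

variable (X : Fin m → Vg n) (i₀ : Fin m) (A : Finset (Fin m))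

lemma single_integral (F : ℝ → ℝ) :
    ∫ p : ↥({i₀} : Finset (Fin m)) → ℝ in Oset {i₀}, F (p default)
      = ∫ r in Ici (0:ℝ), F r := by
  have hpre : (MeasurableEquiv.funUnique (↥({i₀}:Finset (Fin m))) ℝ) ⁻¹' (Ici 0)
      = Oset {i₀} := by
    ext p
    constructor
    · intro h i
      have : i = default := Unique.eq_default i
      rw [this]; exact h
    · intro h; exact h default
  have h := (volume_preserving_funUnique (↥({i₀}:Finset (Fin m))) ℝ).setIntegral_preimage_emb
    (MeasurableEquiv.measurableEmbedding _) F (Ici 0)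
  rw [hpre] at h
  exact h

lemma split_integral (hd : Disjoint {i₀} A)
    (g : Vg n → ℝ)
    (hg : IntegrableOn (fun t : ↥({i₀} ∪ A) → ℝ => g (∑ i, t i • X i))
      (Oset ({i₀} ∪ A))) :
    ((∫ t : ↥({i₀} ∪ A) → ℝ in Oset ({i₀} ∪ A), g (∑ i, t i • X i))
        = ∫ r in Ici (0:ℝ), ∫ t : ↥A → ℝ in Oset A, g (r • X i₀ + ∑ i, t i • X i))
    ∧ ((∫ t : ↥({i₀} ∪ A) → ℝ in Oset ({i₀} ∪ A), g (∑ i, t i • X i))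
        = ∫ t : ↥A → ℝ in Oset A, ∫ r in Ici (0:ℝ), g (r • X i₀ + ∑ i, t i • X i)) := by
  set U : Finset (Fin m) := {i₀} ∪ A with hU
  set e := MeasurableEquiv.piFinsetUnion (fun _ : Fin m => ℝ) hd with he
  set eq := Equiv.Finset.union {i₀} A hd with heq
  have key1 : ∀ (p : ↥({i₀}:Finset (Fin m)) → ℝ) (q : ↥A → ℝ) i,
      e (p, q) (eq (Sum.inl i)) = p i := fun p q i =>
    Equiv.piCongrLeft_sumInl (fun _ => ℝ) eq p q i
  have key2 : ∀ (p : ↥({i₀}:Finset (Fin m)) → ℝ) (q : ↥A → ℝ) j,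
      e (p, q) (eq (Sum.inr j)) = q j := fun p q j =>
    Equiv.piCongrLeft_sumInr (fun _ => ℝ) eq p q j
  have hme : MeasurePreserving e volume volume :=
    volume_preserving_piFinsetUnion (fun _ : Fin m => ℝ) hd
  -- the preimage of the orthant
  have hpre : e ⁻¹' (Oset U) = (Oset {i₀}) ×ˢ (Oset A) := by
    ext z
    obtain ⟨p, q⟩ := z
    constructor
    · intro h
      refine ⟨fun i => ?_, fun j => ?_⟩
      · have := h (eq (Sum.inl i)); rwa [key1] at this
      · have := h (eq (Sum.inr j)); rwa [key2] at this
    · rintro ⟨h1, h2⟩ j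
      have hj : eq (eq.symm j) = j := eq.apply_symm_apply j
      rcases hb : eq.symm j with i | i
      · rw [hb] at hj; rw [← hj, key1]; exact h1 i
      · rw [hb] at hj; rw [← hj, key2]; exact h2 i
  -- the sum formula
  have hsum : ∀ (p : ↥({i₀}:Finset (Fin m)) → ℝ) (q : ↥A → ℝ),
      ∑ j : ↥U, e (p, q) j • X (j:Fin m)
        = p default • X i₀ + ∑ i : ↥A, q i • X (i:Fin m) := by
    intro p q
    rw [← eq.sum_comp (fun j : ↥U => e (p, q) j • X (j:Fin m)), Fintype.sum_sum_type]
    congr 1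
    · rw [Finset.univ_unique, Finset.sum_singleton, key1]
      rfl
    · exact Finset.sum_congr rfl fun j _ => by rw [key2]; rfl
  -- transfer the integral to the product space
  have step1 : (∫ t : ↥U → ℝ in Oset U, g (∑ i, t i • X i))
      = ∫ z in (Oset {i₀}) ×ˢ (Oset A),
          g (z.1 default • X i₀ + ∑ i : ↥A, z.2 i • X (i:Fin m))
          ∂(volume.prod volume) := by
    have h0 := hme.setIntegral_preimage_emb e.measurableEmbedding
      (fun t : ↥U → ℝ => g (∑ i, t i • X i)) (Oset U)
    rw [← h0, hpre, ← Measure.volume_eq_prod]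
    refine setIntegral_congr_fun ((Oset_measurable _).prod (Oset_measurable _)) ?_
    rintro ⟨p, q⟩ _
    simp only
    rw [hsum]
  -- integrability on the product
  have hGint : Integrable
      (fun z : (↥({i₀}:Finset (Fin m)) → ℝ) × (↥A → ℝ) =>
        g (z.1 default • X i₀ + ∑ i : ↥A, z.2 i • X (i:Fin m)))
      ((volume.restrict (Oset {i₀})).prod (volume.restrict (Oset A))) := by
    rw [Measure.prod_restrict]
    have hres : MeasurePreserving e ((volume.prod volume).restrict (e ⁻¹' (Oset U)))
        (volume.restrict (Oset U)) := by
      have := hme.restrict_preimage (s := Oset U) (Oset_measurable U)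
      rwa [Measure.volume_eq_prod (↥({i₀}:Finset (Fin m)) → ℝ) (↥A → ℝ)] at this
    have h2 := (hres.integrable_comp_emb e.measurableEmbedding
      (g := fun t : ↥U → ℝ => g (∑ i, t i • X i))).2 hg
    rw [hpre] at h2
    have : ((fun t : ↥U → ℝ => g (∑ i, t i • X i)) ∘ e)
        = fun z : (↥({i₀}:Finset (Fin m)) → ℝ) × (↥A → ℝ) =>
            g (z.1 default • X i₀ + ∑ i : ↥A, z.2 i • X (i:Fin m)) := by
      funext z
      obtain ⟨p, q⟩ := z
      simp only [Function.comp_apply]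
      rw [hsum]
    rwa [this] at h2
  constructor
  · rw [step1, ← Measure.prod_restrict, MeasureTheory.integral_prod _ hGint]
    exact single_integral i₀
      (fun r => ∫ t : ↥A → ℝ in Oset A, g (r • X i₀ + ∑ i, t i • X i))
  · rw [step1, ← Measure.prod_restrict, MeasureTheory.integral_prod_symm _ hGint]
    refine setIntegral_congr_fun (Oset_measurable A) (fun q _ => ?_)
    exact single_integral i₀ (fun r => g (r • X i₀ + ∑ i, q i • X i))

end Split


section TSLevel

variable {X : Fin m → Vg n} {x : Vg n}

lemma TS_apply (X : Fin m → Vg n) (S : Finset (Fin m)) (f : Vg n → ℝ) :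
    TS X S f = ∫ t : ↥S → ℝ in Oset S, f (∑ i, t i • X i) := rfl

lemma TS_empty (X : Fin m → Vg n) (f : Vg n → ℝ) : TS X ∅ f = f 0 := by
  rw [TS_apply]
  have h1 : (Oset (∅ : Finset (Fin m))) = Set.univ := by
    ext t; simp [Oset]
  have h2 : ∀ t : ↥(∅ : Finset (Fin m)) → ℝ, ∑ i, t i • X (i : Fin m) = 0 := fun t => by
    simp [Finset.univ_eq_empty]
  rw [h1, Measure.restrict_univ]
  simp_rw [h2]
  rw [integral_const]
  have h3 : (volume : Measure (↥(∅ : Finset (Fin m)) → ℝ)) Set.univ = 1 := by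
    rw [MeasureTheory.volume_pi]
    exact Measure.pi_empty_univ _
  rw [measureReal_def, h3]
  simp

lemma TS_split (hx : ∀ i, 0 < inner (𝕜 := ℝ) x (X i)) (i₀ : Fin m)
    (A : Finset (Fin m)) (hd : Disjoint {i₀} A) (f : SchwartzMap (Vg n) ℝ) :
    (TS X ({i₀} ∪ A) ⇑f
        = ∫ r in Ici (0:ℝ), ∫ t : ↥A → ℝ in Oset A, f (r • X i₀ + ∑ i, t i • X i))
    ∧ (TS X ({i₀} ∪ A) ⇑f
        = ∫ t : ↥A → ℝ in Oset A, ∫ r in Ici (0:ℝ), f (r • X i₀ + ∑ i, t i • X i)) := by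
  have hg := integrableOn_schwartz X hx ({i₀} ∪ A)
    ⟨i₀, Finset.mem_union_left _ (Finset.mem_singleton_self i₀)⟩ f
  exact split_integral X i₀ A hd (⇑f) hg

lemma DEq_trans {S T V : GDist n} (h1 : DEq S T) (h2 : DEq T V) : DEq S V :=
  fun f => (h1 f).trans (h2 f)

lemma dirD_congr (a : Vg n) {T T' : GDist n} (h : DEq T T') :
    DEq (dirD a T) (dirD a T') := by
  intro f
  have hfd : (fun v => fderiv ℝ (⇑f) v a) = ⇑((LineDeriv.lineDerivOp a f : SchwartzMap (Vg n) ℝ)) :=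
    funext fun v => (SchwartzMap.lineDerivOp_apply_eq_fderiv a f v).symm
  simp only [dirD, hfd, h ((LineDeriv.lineDerivOp a f : SchwartzMap (Vg n) ℝ))]

lemma deriv_step (hx : ∀ i, 0 < inner (𝕜 := ℝ) x (X i)) (i₀ : Fin m)
    (A : Finset (Fin m)) (hd : Disjoint {i₀} A) :
    DEq (dirD (X i₀) (TS X ({i₀} ∪ A))) (TS X A) := by
  intro f
  set Df := (LineDeriv.lineDerivOp (X i₀) f : SchwartzMap (Vg n) ℝ) with hDfdef
  have hfd : (fun v => fderiv ℝ (⇑f) v (X i₀)) = ⇑Df :=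
    funext fun v => (SchwartzMap.lineDerivOp_apply_eq_fderiv (X i₀) f v).symm
  have h1 : dirD (X i₀) (TS X ({i₀} ∪ A)) ⇑f = -(TS X ({i₀} ∪ A) ⇑Df) := by
    simp only [dirD, hfd]
  rw [h1, (TS_split hx i₀ A hd Df).2]
  have h2 : ∀ t ∈ Oset A,
      (∫ r in Ici (0:ℝ), Df (r • X i₀ + ∑ i : ↥A, t i • X (i:Fin m)))
        = - f (∑ i : ↥A, t i • X (i:Fin m)) := by
    intro t ht
    have hw : 0 ≤ inner (𝕜 := ℝ) x (∑ i : ↥A, t i • X (i:Fin m)) := by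
      rw [inner_sig]
      exact Finset.sum_nonneg fun i _ => mul_nonneg (ht i) (hx i).le
    have := line_integral hx i₀ hw f
    calc (∫ r in Ici (0:ℝ), Df (r • X i₀ + ∑ i : ↥A, t i • X (i:Fin m)))
        = ∫ r in Ici (0:ℝ), fderiv ℝ (⇑f) (r • X i₀ + ∑ i : ↥A, t i • X (i:Fin m)) (X i₀) := by
          refine setIntegral_congr_fun measurableSet_Ici fun r _ => ?_
          rw [SchwartzMap.lineDerivOp_apply_eq_fderiv]
      _ = - f (∑ i : ↥A, t i • X (i:Fin m)) := this
  rw [setIntegral_congr_fun (Oset_measurable A) h2, integral_neg, neg_neg]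
  rfl

lemma foldr_step (hx : ∀ i, 0 < inner (𝕜 := ℝ) x (X i)) :
    ∀ l : List (Fin m), l.Nodup → ∀ S : Finset (Fin m), (∀ i ∈ l, i ∈ S) →
      DEq (l.foldr (fun i T => dirD (X i) T) (TS X S)) (TS X (S \ l.toFinset)) := by
  intro l
  induction l with
  | nil =>
      intro _ S _
      simp only [List.foldr_nil, List.toFinset_nil, Finset.sdiff_empty]
      exact fun f => rfl
  | cons i l' ih =>
      intro hnd S hsub
      obtain ⟨hi, hnd'⟩ := List.nodup_cons.1 hnd
      have ih' := ih hnd' S (fun j hj => hsub j (List.mem_cons_of_mem i hj))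
      have h2 : DEq ((i :: l').foldr (fun i T => dirD (X i) T) (TS X S))
          (dirD (X i) (TS X (S \ l'.toFinset))) := by
        simpa only [List.foldr_cons] using dirD_congr (X i) ih'
      have hmem : i ∈ S \ l'.toFinset :=
        Finset.mem_sdiff.2 ⟨hsub i (List.mem_cons_self (a := i) (l := l')),
          fun h => hi (List.mem_toFinset.1 h)⟩
      set A := (S \ l'.toFinset).erase i with hA
      have hU : {i} ∪ A = S \ l'.toFinset := by
        rw [hA]
        ext j
        simp only [Finset.mem_union, Finset.mem_singleton, Finset.mem_erase]
        constructor
        · rintro (rfl | ⟨_, hj⟩)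
          · exact hmem
          · exact hj
        · intro hj
          by_cases hji : j = i
          · exact Or.inl hji
          · exact Or.inr ⟨hji, hj⟩
      have hd : Disjoint {i} A :=
        Finset.disjoint_singleton_left.2 (Finset.notMem_erase i _)
      have h3 : DEq (dirD (X i) (TS X (S \ l'.toFinset))) (TS X A) := by
        rw [← hU]
        exact deriv_step hx i A hd
      have h4 : A = S \ (i :: l').toFinset := by
        rw [hA, List.toFinset_cons, Finset.sdiff_insert]
      rw [h4] at h3
      exact DEq_trans h2 h3

lemma sing_union_erase {S : Finset (Fin m)} {i₀ : Fin m} (h : i₀ ∈ S) :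
    {i₀} ∪ S.erase i₀ = S := by
  ext j
  simp only [Finset.mem_union, Finset.mem_singleton, Finset.mem_erase]
  constructor
  · rintro (rfl | ⟨_, hj⟩)
    · exact h
    · exact hj
  · intro hj
    by_cases hji : j = i₀
    · exact Or.inl hji
    · exact Or.inr ⟨hji, hj⟩

end TSLevel

end Aux11

open Aux11 in
theorem stmt11 {n m : ℕ} (X : Fin m → Vg n)
    (hX0 : ∀ i, X i ≠ 0)
    (hhalf : ∃ x : Vg n, ∀ i, 0 < inner (𝕜 := ℝ) x (X i)) :
    (∀ i₀ : Fin m,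
      DEq (TS X Finset.univ) (conv (TS X {i₀}) (TS X (Finset.univ.erase i₀)))) ∧
    (∀ i₀ : Fin m,
      DEq (dirD (X i₀) (TS X Finset.univ)) (TS X (Finset.univ.erase i₀))) ∧
    DEq (iterD X Finset.univ (TS X Finset.univ)) delta0 := by
  obtain ⟨x, hx⟩ := hhalf
  refine ⟨?_, ?_, ?_⟩
  · intro i₀ f
    set A := Finset.univ.erase i₀ with hAdef
    have hd : Disjoint {i₀} A :=
      Finset.disjoint_singleton_left.2 (Finset.notMem_erase _ _)
    have hU : {i₀} ∪ A = Finset.univ := sing_union_erase (Finset.mem_univ i₀)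
    have h1 : TS X Finset.univ ⇑f = TS X ({i₀} ∪ A) ⇑f := by rw [hU]
    rw [h1, (TS_split hx i₀ A hd f).1]
    have h2 : conv (TS X {i₀}) (TS X A) ⇑f
        = ∫ p : ↥({i₀}:Finset (Fin m)) → ℝ in Oset {i₀},
            (fun r => ∫ t : ↥A → ℝ in Oset A, f (r • X i₀ + ∑ i, t i • X i))
              (p default) := by
      simp only [conv, TS_apply]
      refine setIntegral_congr_fun (Oset_measurable _) fun p _ => ?_
      have hsum : ∑ i : ↥({i₀}:Finset (Fin m)), p i • X (i:Fin m) = p default • X i₀ := by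
        rw [Finset.univ_unique, Finset.sum_singleton]
        rfl
      rw [hsum]
    rw [h2]
    exact (single_integral i₀
      (fun r => ∫ t : ↥A → ℝ in Oset A, f (r • X i₀ + ∑ i, t i • X i))).symm
  · intro i₀ f
    set A := Finset.univ.erase i₀ with hAdef
    have hd : Disjoint {i₀} A :=
      Finset.disjoint_singleton_left.2 (Finset.notMem_erase _ _)
    have hU : {i₀} ∪ A = Finset.univ := sing_union_erase (Finset.mem_univ i₀)
    have h1 : TS X Finset.univ = TS X ({i₀} ∪ A) := by rw [hU]
    rw [h1]
    exact deriv_step hx i₀ A hd f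
  · have h := foldr_step hx Finset.univ.toList (Finset.nodup_toList _) Finset.univ
      (fun i _ => Finset.mem_univ i)
    rw [Finset.toList_toFinset, Finset.sdiff_self] at h
    exact DEq_trans (fun f => rfl) (DEq_trans h (fun f => TS_empty X ⇑f))
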